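/- No integer of the form 4mn - (m + n) with m, n positive integers is a perfect square. -/

import Mathlib

private lemma exists_prime_mod_four_eq_three : ∀ d : ℕ, d % 4 = 3 →
    ∃ p : ℕ, p.Prime ∧ p ∣ d ∧ p % 4 = 3 := by
  intro d
  induction d using Nat.strong_induction_on with
  | _ d ih =>
    intro hd
    have hd1 : d ≠ 1 := by omega
    have hp : d.minFac.Prime := Nat.minFac_prime hd1
    have hpd : d.minFac ∣ d := Nat.minFac_dvd d
    by_cases h3 : d.minFac % 4 = 3
    · exact ⟨d.minFac, hp, hpd, h3⟩
    · have hp2 : d.minFac ≠ 2 := by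
        intro h
        obtain ⟨c, hc⟩ := h ▸ hpd
        omega
      have hpodd : d.minFac % 2 = 1 := hp.eq_two_or_odd.resolve_left hp2
      have hp1 : d.minFac % 4 = 1 := by
        rcases Nat.odd_mod_four_iff.mp hpodd with h | h
        · exact h
        · exact absurd h h3
      obtain ⟨q, hq⟩ := hpd
      have hq3 : q % 4 = 3 := by
        have := Nat.mul_mod d.minFac q 4
        rw [← hq, hd, hp1] at this
        omega
      have hqlt : q < d := by
        have h2 : 2 ≤ d.minFac := hp.two_le
        have hq0 : 0 < q := by
          rcases Nat.eq_zero_or_pos q with h | h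
          · simp [h] at hq; omega
          · exact h
        calc q < 2 * q := by omega
          _ ≤ d.minFac * q := Nat.mul_le_mul_right q h2
          _ = d := hq.symm
      obtain ⟨p, hpp, hpq, hp3⟩ := ih q hqlt hq3
      exact ⟨p, hpp, hpq.trans (Dvd.intro_left d.minFac hq.symm), hp3⟩

theorem euler_e164_scholion2 (m n : ℤ) (hm : 0 < m) (hn : 0 < n) :
    ¬ IsSquare (4 * m * n - (m + n)) := by
  rintro ⟨k, hk⟩
  -- key identity: (4m-1)(4n-1) = (2k)^2 + 1
  have key : (4 * m - 1) * (4 * n - 1) = (2 * k) ^ 2 + 1 := by ring_nf; linarith [hk]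
  set N : ℕ := ((2 * k) ^ 2 + 1).toNat with hN
  have hNpos : (0:ℤ) < (2 * k) ^ 2 + 1 := by positivity
  have hNcast : (N : ℤ) = (2 * k) ^ 2 + 1 := Int.toNat_of_nonneg hNpos.le
  set d : ℕ := (4 * m - 1).toNat with hd
  have hdcast : (d : ℤ) = 4 * m - 1 := Int.toNat_of_nonneg (by omega)
  have hdvd : d ∣ N := by
    have : (d : ℤ) ∣ (N : ℤ) := by
      rw [hdcast, hNcast, ← key]; exact Dvd.intro _ rfl
    exact_mod_cast this
  have hd3 : d % 4 = 3 := by omega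
  obtain ⟨p, hpp, hpd, hp3⟩ := exists_prime_mod_four_eq_three d hd3
  have hsq : IsSquare (-1 : ZMod N) := by
    refine ⟨(2 * k : ℤ), ?_⟩
    have : ((N : ℤ) : ZMod N) = 0 := by exact_mod_cast ZMod.natCast_self N
    have h2 : (((2 * k) ^ 2 + 1 : ℤ) : ZMod N) = 0 := by rw [← hNcast]; exact this
    push_cast at h2 ⊢
    linear_combination -h2
  exact Nat.mod_four_ne_three_of_mem_primeFactors_of_isSquare_neg_one
    (Nat.mem_primeFactors.mpr ⟨hpp, hpd.trans hdvd, by omega⟩) hsq hp3
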